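/- Let μ̂_1, μ̂_2, m, μ ∈ ℝ^d with ‖μ̂_1 - μ‖ ≤ r and ‖μ̂_2 - μ‖ ≤ r. Let S be the set of coordinates i such that m_i lies between (μ̂_1)_i and (μ̂_2)_i (inclusive). Then ∑_{i ∈ S} (m_i - μ_i)² ≤ 2r². -/
import Mathlib


/-- If `‖μ̂₁ - μ‖ ≤ r`, `‖μ̂₂ - μ‖ ≤ r`, and on every coordinate of `S` the
value `m i` lies between `μ̂₁ i` and `μ̂₂ i`, then `∑_{i∈S} (m i - μ i)² ≤ 2r²`. -/
theorem between_coords_bound (d : ℕ)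
    (μhat₁ μhat₂ m μ : EuclideanSpace ℝ (Fin d)) (r : ℝ) (hr : 0 < r)
    (h1 : ‖μhat₁ - μ‖ ≤ r) (h2 : ‖μhat₂ - μ‖ ≤ r)
    (S : Finset (Fin d))
    (hS : ∀ i ∈ S, (μhat₁ i ≤ m i ∧ m i ≤ μhat₂ i) ∨
                   (μhat₂ i ≤ m i ∧ m i ≤ μhat₁ i)) :
    ∑ i ∈ S, (m i - μ i) ^ 2 ≤ 2 * r ^ 2 := by
  have key : ∑ i ∈ S, (m i - μ i) ^ 2 ≤
      ∑ i ∈ S, ((μhat₁ i - μ i) ^ 2 + (μhat₂ i - μ i) ^ 2) := by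
    apply Finset.sum_le_sum
    intro i hi
    rcases hS i hi with ⟨ha, hb⟩ | ⟨ha, hb⟩ <;>
      rcases le_total (m i) (μ i) with hc | hc <;>
      nlinarith [sq_nonneg (μhat₁ i - μ i), sq_nonneg (μhat₂ i - μ i)]
  have hnorm1 : ∑ i ∈ S, (μhat₁ i - μ i) ^ 2 ≤ r ^ 2 := by
    have := EuclideanSpace.norm_eq (μhat₁ - μ)
    have hle : ∑ i ∈ S, (μhat₁ i - μ i) ^ 2 ≤ ∑ i, (μhat₁ i - μ i) ^ 2 :=
      Finset.sum_le_sum_of_subset_of_nonneg (Finset.subset_univ S)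
        (fun i _ _ => sq_nonneg _)
    have h' : ∑ i, (μhat₁ i - μ i) ^ 2 = ‖μhat₁ - μ‖ ^ 2 := by
      rw [this, Real.sq_sqrt (by positivity)]
      simp [PiLp.sub_apply]
    have : ‖μhat₁ - μ‖ ^ 2 ≤ r ^ 2 := by
      have := norm_nonneg (μhat₁ - μ); nlinarith
    linarith
  have hnorm2 : ∑ i ∈ S, (μhat₂ i - μ i) ^ 2 ≤ r ^ 2 := by
    have := EuclideanSpace.norm_eq (μhat₂ - μ)
    have hle : ∑ i ∈ S, (μhat₂ i - μ i) ^ 2 ≤ ∑ i, (μhat₂ i - μ i) ^ 2 :=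
      Finset.sum_le_sum_of_subset_of_nonneg (Finset.subset_univ S)
        (fun i _ _ => sq_nonneg _)
    have h' : ∑ i, (μhat₂ i - μ i) ^ 2 = ‖μhat₂ - μ‖ ^ 2 := by
      rw [this, Real.sq_sqrt (by positivity)]
      simp [PiLp.sub_apply]
    have : ‖μhat₂ - μ‖ ^ 2 ≤ r ^ 2 := by
      have := norm_nonneg (μhat₂ - μ); nlinarith
    linarith
  rw [Finset.sum_add_distrib] at key
  linarith
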